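/- ∫_{1/2}^∞ τ (tanh(π √(τ² − 1/4)) − 1) dτ = −1/24. -/

import Mathlib

open Real MeasureTheory Set

-- η(2) = π²/12
lemma hasSum_eta_two' : HasSum (fun n : ℕ => ((-1:ℝ)) ^ n / ((n:ℝ)+1) ^ 2) (π ^ 2 / 12) := by
  have h6 : HasSum (fun n : ℕ => (1 : ℝ) / ((n:ℝ)+1) ^ 2) (π ^ 2 / 6) := by
    have h := (hasSum_nat_add_iff' (f := fun n : ℕ => (1 : ℝ) / (n:ℝ) ^ 2) 1).mpr hasSum_zeta_two
    simpa using h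
  have hodd : HasSum (fun n : ℕ => if Even n then (0:ℝ) else 1/((n:ℝ)+1)^2) (π ^ 2 / 24) := by
    have hinj : Function.Injective (fun m : ℕ => 2*m+1) := by
      intro a b h
      simp only at h
      omega
    have hzero : ∀ n ∉ Set.range (fun m : ℕ => 2*m+1),
        (if Even n then (0:ℝ) else 1/((n:ℝ)+1)^2) = 0 := by
      intro n hn
      have : Even n := by
        by_contra h
        obtain ⟨k, hk⟩ := Nat.not_even_iff_odd.mp h
        exact hn ⟨k, by show 2*k+1 = n; omega⟩
      simp [this]
    rw [← Function.Injective.hasSum_iff hinj hzero]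
    have hsum := h6.mul_left (1/4)
    have hval : (1/4) * (π ^ 2 / 6) = π ^ 2 / 24 := by ring
    rw [hval] at hsum
    refine hsum.congr_fun (fun m => ?_)
    have hodd' : ¬ Even (2*m+1) := by simp [Nat.even_add_one, parity_simps]
    simp only [Function.comp_apply, hodd', if_false]
    push_cast
    field_simp
    ring
  have hsub := h6.sub (hodd.mul_left 2)
  have hval : π ^ 2 / 6 - 2 * (π ^ 2 / 24) = π ^ 2 / 12 := by ring
  rw [hval] at hsub
  refine hsub.congr_fun (fun n => ?_)
  rcases Nat.even_or_odd n with h | h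
  · simp [h, h.neg_one_pow]
  · simp only [Nat.not_even_iff_odd.mpr h, if_false, h.neg_one_pow]
    ring

lemma integrable_aux {c : ℝ} (hc : 0 < c) :
    IntegrableOn (fun u : ℝ => u * Real.exp (-c * u)) (Ioi 0) := by
  have h := integrableOn_rpow_mul_exp_neg_mul_rpow (s := 1) (p := 1) (by norm_num) one_pos hc
  refine h.congr_fun (fun x hx => ?_) measurableSet_Ioi
  simp only [Real.rpow_one]

lemma integral_aux {c : ℝ} (hc : 0 < c) :
    ∫ u in Ioi (0:ℝ), u * Real.exp (-c * u) = 1 / c ^ 2 := by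
  have h := Real.integral_rpow_mul_exp_neg_mul_Ioi (a := 2) two_pos hc
  rw [show ∫ u in Ioi (0:ℝ), u * Real.exp (-c * u)
      = ∫ t in Ioi (0:ℝ), t ^ ((2:ℝ) - 1) * Real.exp (-(c * t)) from
    setIntegral_congr_fun measurableSet_Ioi (fun x hx => by
      norm_num [Real.rpow_one]), h, Real.Gamma_two]
  rw [show ((2:ℝ)) = ((2:ℕ):ℝ) by norm_num, Real.rpow_natCast]
  field_simp

lemma tanh_sub_one (x : ℝ) :
    Real.tanh x - 1 = -2 * Real.exp (-(2*x)) / (1 + Real.exp (-(2*x))) := by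
  rw [Real.tanh_eq_sinh_div_cosh, Real.sinh_eq, Real.cosh_eq]
  have h1 : Real.exp (-x) = (Real.exp x)⁻¹ := Real.exp_neg x
  have h2 : Real.exp (-(2*x)) = ((Real.exp x)⁻¹)^2 := by
    rw [show -(2*x) = -x + -x by ring, Real.exp_add, h1, sq]
  have hx : Real.exp x ≠ 0 := Real.exp_ne_zero x
  have hx2 : (0:ℝ) < 1 + Real.exp (-(2*x)) := by positivity
  rw [h1, h2] at *
  field_simp
  ring

lemma hasSum_integrand {u : ℝ} (hu : 0 < u) :
    HasSum (fun n : ℕ => (-2) * ((-1:ℝ)) ^ n * (u * Real.exp (-(2*π*((n:ℝ)+1)) * u)))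
      (u * (Real.tanh (π * u) - 1)) := by
  set r : ℝ := -Real.exp (-(2*(π*u))) with hr
  have hrn : ‖r‖ < 1 := by
    rw [hr, norm_neg, Real.norm_eq_abs, abs_of_pos (Real.exp_pos _)]
    exact Real.exp_lt_one_iff.mpr (by nlinarith [Real.pi_pos])
  have hgeo := hasSum_geometric_of_norm_lt_one hrn
  have hsum := hgeo.mul_left ((-2) * u * Real.exp (-(2*(π*u))))
  have heq : ∀ n : ℕ, (-2) * ((-1:ℝ)) ^ n * (u * Real.exp (-(2*π*((n:ℝ)+1)) * u))
      = (-2) * u * Real.exp (-(2*(π*u))) * r ^ n := by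
    intro n
    have hexp : Real.exp (-(2*(π*u))) * Real.exp ((n:ℝ) * -(2*(π*u)))
        = Real.exp (-(2*π*((n:ℝ)+1)) * u) := by
      rw [← Real.exp_add]
      congr 1
      ring
    have hpow : (-Real.exp (-(2*(π*u)))) ^ n = (-1:ℝ)^n * Real.exp ((n:ℝ) * -(2*(π*u))) := by
      rw [neg_pow, ← Real.exp_nat_mul]
    rw [hr, hpow, ← hexp]
    ring
  have hfinal := hsum.congr_fun heq
  convert hfinal using 1
  · rfl
  rw [tanh_sub_one (π * u)]
  have h2 : (0:ℝ) < 1 + Real.exp (-(2*(π*u))) := by positivity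
  have h3 : (1:ℝ) - r = 1 + Real.exp (-(2*(π*u))) := by rw [hr]; ring
  rw [h3, div_eq_mul_inv]
  ring

lemma stepB : ∫ u in Ioi (0:ℝ), u * (Real.tanh (π * u) - 1) = -1/24 := by
  set F : ℕ → ℝ → ℝ := fun n u => (-2) * ((-1:ℝ)) ^ n * (u * Real.exp (-(2*π*((n:ℝ)+1)) * u))
    with hF
  have hc : ∀ n : ℕ, (0:ℝ) < 2*π*((n:ℝ)+1) := by
    intro n; have := Real.pi_pos; positivity
  have hint : ∀ n, Integrable (F n) (volume.restrict (Ioi 0)) := by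
    intro n
    exact ((integrable_aux (hc n)).const_mul _)
  have hnormval : ∀ n, ∫ u in Ioi (0:ℝ), ‖F n u‖ = 2 * (1 / (2*π*((n:ℝ)+1)) ^ 2) := by
    intro n
    have heq : ∀ u ∈ Ioi (0:ℝ), ‖F n u‖ = 2 * (u * Real.exp (-(2*π*((n:ℝ)+1)) * u)) := by
      intro u hu
      have hu' : 0 < u := mem_Ioi.mp hu
      simp only [hF, Real.norm_eq_abs, abs_mul, abs_pow, abs_neg, abs_one, one_pow,
        abs_of_pos hu', abs_of_pos (Real.exp_pos _)]
      norm_num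
    rw [setIntegral_congr_fun measurableSet_Ioi heq, integral_const_mul, integral_aux (hc n)]
  have h6 : Summable (fun n : ℕ => (1 : ℝ) / ((n:ℝ)+1) ^ 2) := by
    have h := (hasSum_nat_add_iff' (f := fun n : ℕ => (1 : ℝ) / (n:ℝ) ^ 2) 1).mpr hasSum_zeta_two
    exact (by simpa using h : HasSum _ _).summable
  have hπ : (π:ℝ) ≠ 0 := Real.pi_ne_zero
  have hsummable : Summable (fun n : ℕ => ∫ u in Ioi (0:ℝ), ‖F n u‖) := by
    refine Summable.congr ?_ (fun n => (hnormval n).symm)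
    refine (h6.mul_left (2 * (1/(2*π))^2)).congr (fun n => ?_)
    field_simp
  have hv : ∀ n, ∫ u in Ioi (0:ℝ), F n u
      = (-1/(2*π^2)) * (((-1:ℝ)) ^ n / ((n:ℝ)+1) ^ 2) := by
    intro n
    simp only [hF]
    rw [show (fun u : ℝ => (-2) * ((-1:ℝ)) ^ n * (u * Real.exp (-(2*π*((n:ℝ)+1)) * u)))
      = (fun u : ℝ => ((-2) * ((-1:ℝ)) ^ n) • (u * Real.exp (-(2*π*((n:ℝ)+1)) * u))) from rfl]
    rw [integral_smul, integral_aux (hc n)]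
    have hne : ((n:ℝ)+1) ≠ 0 := by positivity
    rw [smul_eq_mul]
    field_simp
  calc ∫ u in Ioi (0:ℝ), u * (Real.tanh (π * u) - 1)
      = ∫ u in Ioi (0:ℝ), ∑' n, F n u :=
        setIntegral_congr_fun measurableSet_Ioi
          (fun u hu => ((hasSum_integrand (mem_Ioi.mp hu)).tsum_eq).symm)
    _ = ∑' n, ∫ u in Ioi (0:ℝ), F n u :=
        (integral_tsum_of_summable_integral_norm hint hsummable).symm
    _ = ∑' n : ℕ, (-1/(2*π^2)) * (((-1:ℝ)) ^ n / ((n:ℝ)+1) ^ 2) := tsum_congr hv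
    _ = (-1/(2*π^2)) * (π ^ 2 / 12) := (hasSum_eta_two'.mul_left _).tsum_eq
    _ = -1/24 := by field_simp; ring

theorem integral_tanh_first :
    ∫ τ in Set.Ioi (1/2 : ℝ),
      τ * (Real.tanh (π * Real.sqrt (τ ^ 2 - 1/4)) - 1) = -1/24 := by
  have himg : (fun τ : ℝ => Real.sqrt (τ ^ 2 - 1/4)) '' (Ioi (1/2 : ℝ)) = Ioi (0:ℝ) := by
    ext u
    constructor
    · rintro ⟨τ, hτ, rfl⟩
      have hτ' : (1/2:ℝ) < τ := hτ
      have : (0:ℝ) < τ ^ 2 - 1/4 := by nlinarith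
      exact mem_Ioi.mpr (Real.sqrt_pos.mpr this)
    · intro hu
      have hu' : (0:ℝ) < u := hu
      refine ⟨Real.sqrt (u ^ 2 + 1/4), ?_, ?_⟩
      · have : (1/2:ℝ) = Real.sqrt (1/4) := by
          rw [show (1/4:ℝ) = (1/2)^2 by norm_num, Real.sqrt_sq (by norm_num)]
        rw [mem_Ioi, this]
        exact Real.sqrt_lt_sqrt (by norm_num) (by nlinarith)
      · show Real.sqrt (Real.sqrt (u ^ 2 + 1/4) ^ 2 - 1/4) = u
        rw [Real.sq_sqrt (by positivity)]
        simp only [add_sub_cancel_right]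
        exact Real.sqrt_sq hu'.le
  have hderiv : ∀ τ ∈ Ioi (1/2 : ℝ),
      HasDerivWithinAt (fun τ : ℝ => Real.sqrt (τ ^ 2 - 1/4))
        (τ / Real.sqrt (τ ^ 2 - 1/4)) (Ioi (1/2 : ℝ)) τ := by
    intro τ hτ
    have hτ' : (1/2:ℝ) < τ := hτ
    have hpos : (0:ℝ) < τ ^ 2 - 1/4 := by nlinarith
    have h1 : HasDerivAt (fun τ : ℝ => τ ^ 2 - 1/4) (2 * τ) τ := by
      simpa using (hasDerivAt_pow 2 τ).sub_const (1/4)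
    have h2 := (Real.hasDerivAt_sqrt hpos.ne').comp τ h1
    have h3 : 1 / (2 * Real.sqrt (τ ^ 2 - 1/4)) * (2 * τ)
        = (2 * τ) / (2 * Real.sqrt (τ ^ 2 - 1/4)) := by ring
    rw [h3, mul_div_mul_left _ _ (two_ne_zero)] at h2
    exact h2.hasDerivWithinAt
  have hinj : InjOn (fun τ : ℝ => Real.sqrt (τ ^ 2 - 1/4)) (Ioi (1/2 : ℝ)) := by
    intro a ha b hb h
    have ha' : (1/2:ℝ) < a := ha
    have hb' : (1/2:ℝ) < b := hb
    have ha2 : (0:ℝ) ≤ a ^ 2 - 1/4 := by nlinarith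
    have hb2 : (0:ℝ) ≤ b ^ 2 - 1/4 := by nlinarith
    have := (Real.sqrt_inj ha2 hb2).mp h
    nlinarith
  have hchg := integral_image_eq_integral_abs_deriv_smul measurableSet_Ioi hderiv hinj
    (fun u => u * (Real.tanh (π * u) - 1))
  rw [himg] at hchg
  rw [← stepB, hchg]
  refine setIntegral_congr_fun measurableSet_Ioi (fun τ hτ => ?_)
  have hτ' : (1/2:ℝ) < τ := hτ
  have hpos : (0:ℝ) < τ ^ 2 - 1/4 := by nlinarith
  have hs : (0:ℝ) < Real.sqrt (τ ^ 2 - 1/4) := Real.sqrt_pos.mpr hpos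
  have hτ0 : (0:ℝ) < τ := by linarith
  set s := Real.sqrt (τ ^ 2 - 1/4) with hsdef
  rw [smul_eq_mul, abs_of_pos (div_pos hτ0 hs)]
  field_simp [hs.ne']
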